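/- (Approximate policy improvement step.) Let ε ≥ 0, let v ∈ ℝ^S, let π be a policy with ‖L_π v − v‖∞ ≤ (1−γ) ε, and let π' be a policy greedy for v, i.e. L_{π'} v = L v. Then the robust value functions satisfy v_{π'} ≥ v_π − (2γε/(1−γ)) · 1 componentwise, where 1 is the all-ones vector and v_π, v_{π'} are the unique fixed points of L_π, L_{π'}. -/

import Mathlib

/-- Approximate policy improvement step. If `‖Lpi v − v‖∞ ≤ (1−γ)ε`
and π' is greedy for `v`, then `vpi' ≥ vpi − (2γε/(1−γ))·1` componentwise. -/
theorem approximate_policy_improvement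
    {S A : Type*} [Fintype S] [Nonempty S] [Fintype A] [Nonempty A]
    (γ : ℝ) (hγ0 : 0 < γ) (hγ1 : γ < 1)
    (r : S → A → S → ℝ)
    (P : S → Set (A → S → ℝ))
    (hPne : ∀ s, (P s).Nonempty)
    (hPcompact : ∀ s, IsCompact (P s))
    (hPsub : ∀ s, ∀ p ∈ P s, ∀ a, p a ∈ stdSimplex ℝ S)
    (Lpol : (S → A → ℝ) → (S → ℝ) → (S → ℝ))
    (hLpol : ∀ (π : S → A → ℝ) (v : S → ℝ) (s : S), Lpol π v s =
      sInf ((fun p : A → S → ℝ =>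
        ∑ a, π s a * ∑ s', p a s' * (r s a s' + γ * v s')) '' P s))
    (L : (S → ℝ) → (S → ℝ))
    (hL : ∀ v s, L v s =
      sSup ((fun d : A → ℝ =>
        sInf ((fun p : A → S → ℝ =>
          ∑ a, d a * ∑ s', p a s' * (r s a s' + γ * v s')) '' P s)) '' stdSimplex ℝ A))
    (ε : ℝ) (hε : 0 ≤ ε)
    (v : S → ℝ)
    (π π' : S → A → ℝ)
    (hπ : ∀ s, π s ∈ stdSimplex ℝ A) (hπ' : ∀ s, π' s ∈ stdSimplex ℝ A)
    (heval : ‖Lpol π v - v‖ ≤ (1 - γ) * ε)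
    (hgreedy : Lpol π' v = L v)
    (vpi vpi' : S → ℝ)
    (hvpi : Lpol π (vpi) = vpi) (hvpi' : Lpol π' (vpi') = vpi') :
    (fun s => vpi s - 2 * γ * ε / (1 - γ)) ≤ vpi' := by
  have hγ1' : (0:ℝ) < 1 - γ := by linarith
  -- uniform bound on the integrands
  set B : (S → ℝ) → S → ℝ := fun w s => ∑ a, ∑ s', |r s a s' + γ * w s'| with hBdef
  have hbd : ∀ (d : A → ℝ), d ∈ stdSimplex ℝ A → ∀ (w : S → ℝ) (s : S),
      ∀ p ∈ P s, |∑ a, d a * ∑ s', p a s' * (r s a s' + γ * w s')| ≤ B w s := by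
    intro d hd w s p hp
    calc |∑ a, d a * ∑ s', p a s' * (r s a s' + γ * w s')|
        ≤ ∑ a, |d a * ∑ s', p a s' * (r s a s' + γ * w s')| :=
          Finset.abs_sum_le_sum_abs _ _
      _ ≤ ∑ a, d a * B w s := by
          apply Finset.sum_le_sum; intro a _
          rw [abs_mul, abs_of_nonneg (hd.1 a)]
          apply mul_le_mul_of_nonneg_left _ (hd.1 a)
          calc |∑ s', p a s' * (r s a s' + γ * w s')|
              ≤ ∑ s', |p a s' * (r s a s' + γ * w s')| := Finset.abs_sum_le_sum_abs _ _
            _ ≤ ∑ s', |r s a s' + γ * w s'| := by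
                apply Finset.sum_le_sum; intro s' _
                rw [abs_mul, abs_of_nonneg ((hPsub s p hp a).1 s')]
                have h1 : p a s' ≤ 1 := by
                  have h2 := (hPsub s p hp a).2
                  have h3 : p a s' ≤ ∑ t, p a t :=
                    Finset.single_le_sum (fun t _ => (hPsub s p hp a).1 t) (Finset.mem_univ s')
                  linarith
                nlinarith [abs_nonneg (r s a s' + γ * w s'), (hPsub s p hp a).1 s']
            _ ≤ B w s := Finset.single_le_sum
                (f := fun a => ∑ s', |r s a s' + γ * w s'|)
                (fun a _ => Finset.sum_nonneg fun s' _ => abs_nonneg _) (Finset.mem_univ a)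
      _ = B w s := by rw [← Finset.sum_mul, hd.2, one_mul]
  have hbddBelow : ∀ (d : A → ℝ), d ∈ stdSimplex ℝ A → ∀ (w : S → ℝ) (s : S),
      BddBelow ((fun p : A → S → ℝ =>
        ∑ a, d a * ∑ s', p a s' * (r s a s' + γ * w s')) '' P s) := by
    intro d hd w s
    refine ⟨-(B w s), ?_⟩
    rintro x ⟨p, hp, rfl⟩
    have := hbd d hd w s p hp
    exact neg_le_of_neg_le (by linarith [neg_abs_le (∑ a, d a * ∑ s', p a s' * (r s a s' + γ * w s'))])
  have hne : ∀ (d : A → ℝ) (w : S → ℝ) (s : S),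
      ((fun p : A → S → ℝ =>
        ∑ a, d a * ∑ s', p a s' * (r s a s' + γ * w s')) '' P s).Nonempty :=
    fun d w s => (hPne s).image _
  -- monotonicity
  have hmono : ∀ (μ : S → A → ℝ), (∀ s, μ s ∈ stdSimplex ℝ A) →
      ∀ (u w : S → ℝ), (∀ s, u s ≤ w s) → ∀ s, Lpol μ u s ≤ Lpol μ w s := by
    intro μ hμ u w huw s
    rw [hLpol, hLpol]
    apply le_csInf (hne (μ s) w s)
    rintro x ⟨p, hp, rfl⟩
    refine le_trans (csInf_le (hbddBelow (μ s) (hμ s) u s) ⟨p, hp, rfl⟩) ?_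
    apply Finset.sum_le_sum; intro a _
    apply mul_le_mul_of_nonneg_left _ ((hμ s).1 a)
    apply Finset.sum_le_sum; intro s' _
    apply mul_le_mul_of_nonneg_left _ ((hPsub s p hp a).1 s')
    have := huw s'
    nlinarith
  -- constant shift
  have hshift : ∀ (μ : S → A → ℝ), (∀ s, μ s ∈ stdSimplex ℝ A) →
      ∀ (w : S → ℝ) (c : ℝ) (s : S),
      Lpol μ (fun t => w t + c) s = Lpol μ w s + γ * c := by
    intro μ hμ w c s
    have hptw : ∀ p ∈ P s,
        ∑ a, μ s a * ∑ s', p a s' * (r s a s' + γ * (w s' + c)) =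
        (∑ a, μ s a * ∑ s', p a s' * (r s a s' + γ * w s')) + γ * c := by
      intro p hp
      have hrow : ∀ a, ∑ s', p a s' * (r s a s' + γ * (w s' + c)) =
          (∑ s', p a s' * (r s a s' + γ * w s')) + γ * c := by
        intro a
        have hsum : ∑ s', p a s' = 1 := (hPsub s p hp a).2
        calc ∑ s', p a s' * (r s a s' + γ * (w s' + c))
            = ∑ s', (p a s' * (r s a s' + γ * w s') + p a s' * (γ * c)) := by
              apply Finset.sum_congr rfl; intro s' _; ring
          _ = (∑ s', p a s' * (r s a s' + γ * w s')) + (∑ s', p a s') * (γ * c) := by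
              rw [Finset.sum_add_distrib, Finset.sum_mul]
          _ = _ := by rw [hsum]; ring
      calc ∑ a, μ s a * ∑ s', p a s' * (r s a s' + γ * (w s' + c))
          = ∑ a, (μ s a * ∑ s', p a s' * (r s a s' + γ * w s') + μ s a * (γ * c)) := by
            apply Finset.sum_congr rfl; intro a _; rw [hrow a]; ring
        _ = (∑ a, μ s a * ∑ s', p a s' * (r s a s' + γ * w s'))
              + (∑ a, μ s a) * (γ * c) := by rw [Finset.sum_add_distrib, Finset.sum_mul]
        _ = _ := by rw [(hμ s).2]; ring
    have hbb' : BddBelow ((fun p : A → S → ℝ =>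
        ∑ a, μ s a * ∑ s', p a s' * (r s a s' + γ * (w s' + c))) '' P s) := by
      refine ⟨-(B w s) + γ * c, ?_⟩
      rintro x ⟨p, hp, rfl⟩
      have heq := hptw p hp
      dsimp only
      rw [heq]
      have := hbd (μ s) (hμ s) w s p hp
      have := neg_abs_le (∑ a, μ s a * ∑ s', p a s' * (r s a s' + γ * w s'))
      linarith
    have hne' : ((fun p : A → S → ℝ =>
        ∑ a, μ s a * ∑ s', p a s' * (r s a s' + γ * (w s' + c))) '' P s).Nonempty :=
      (hPne s).image _
    simp only [hLpol]
    apply le_antisymm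
    · rw [← sub_le_iff_le_add]
      apply le_csInf (hne (μ s) w s)
      rintro x ⟨p, hp, rfl⟩
      dsimp only
      rw [sub_le_iff_le_add]
      exact csInf_le hbb' ⟨p, hp, hptw p hp⟩
    · apply le_csInf hne'
      rintro x ⟨p, hp, rfl⟩
      have heq := hptw p hp
      dsimp only
      rw [heq]
      exact add_le_add (csInf_le (hbddBelow (μ s) (hμ s) w s) ⟨p, hp, rfl⟩) le_rfl
  -- lower fixed point comparison : w ≤ Lpol μ w ⇒ w ≤ vμ
  have hub : ∀ (μ : S → A → ℝ), (∀ s, μ s ∈ stdSimplex ℝ A) →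
      ∀ (w vμ : S → ℝ), Lpol μ vμ = vμ → (∀ s, w s ≤ Lpol μ w s) → ∀ s, w s ≤ vμ s := by
    intro μ hμ w vμ hfix hw
    set m := Finset.univ.sup' Finset.univ_nonempty (fun s => w s - vμ s) with hmdef
    have hm : ∀ s, w s - vμ s ≤ m := by
      intro s; rw [hmdef]
      exact Finset.le_sup' (fun s => w s - vμ s) (Finset.mem_univ s)
    have hle : ∀ s, w s ≤ (fun t => vμ t + m) s := fun s => by
      have := hm s; simp only []; linarith
    have h2 : ∀ s, Lpol μ w s ≤ Lpol μ (fun t => vμ t + m) s :=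
      hmono μ hμ _ _ hle
    have h3 : ∀ s, Lpol μ (fun t => vμ t + m) s = vμ s + γ * m := by
      intro s; rw [hshift μ hμ vμ m s, hfix]
    obtain ⟨s₀, _, hs₀⟩ := Finset.exists_mem_eq_sup' (Finset.univ_nonempty (α := S))
      (fun s => w s - vμ s)
    have hmγ : m ≤ γ * m := by
      have e1 := hw s₀
      have e2 := h2 s₀
      have e3 := h3 s₀
      have e4 : m = w s₀ - vμ s₀ := hmdef.trans hs₀
      linarith
    have hm0 : m ≤ 0 := by nlinarith
    intro s; linarith [hm s]
  -- upper fixed point comparison : Lpol μ w ≤ w ⇒ vμ ≤ w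
  have hlb : ∀ (μ : S → A → ℝ), (∀ s, μ s ∈ stdSimplex ℝ A) →
      ∀ (w vμ : S → ℝ), Lpol μ vμ = vμ → (∀ s, Lpol μ w s ≤ w s) → ∀ s, vμ s ≤ w s := by
    intro μ hμ w vμ hfix hw
    set m := Finset.univ.sup' Finset.univ_nonempty (fun s => vμ s - w s) with hmdef
    have hm : ∀ s, vμ s - w s ≤ m := by
      intro s; rw [hmdef]
      exact Finset.le_sup' (fun s => vμ s - w s) (Finset.mem_univ s)
    have hle : ∀ s, vμ s ≤ (fun t => w t + m) s := fun s => by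
      have := hm s; simp only []; linarith
    have h2 : ∀ s, Lpol μ vμ s ≤ Lpol μ (fun t => w t + m) s :=
      hmono μ hμ _ _ hle
    have h3 : ∀ s, Lpol μ (fun t => w t + m) s = Lpol μ w s + γ * m :=
      fun s => hshift μ hμ w m s
    obtain ⟨s₀, _, hs₀⟩ := Finset.exists_mem_eq_sup' (Finset.univ_nonempty (α := S))
      (fun s => vμ s - w s)
    have hmγ : m ≤ γ * m := by
      have e1 := hw s₀
      have e2 := h2 s₀
      have e3 := h3 s₀
      have e4 : vμ s₀ = Lpol μ vμ s₀ := (congrFun hfix s₀).symm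
      have e5 : m = vμ s₀ - w s₀ := hmdef.trans hs₀
      linarith
    have hm0 : m ≤ 0 := by nlinarith
    intro s; linarith [hm s]
  -- componentwise bound from the norm hypothesis
  have hLpv : ∀ s, |Lpol π v s - v s| ≤ (1 - γ) * ε := by
    intro s
    have h1 : ‖(Lpol π v - v) s‖ ≤ ‖Lpol π v - v‖ := norm_le_pi_norm _ s
    have h2 : (Lpol π v - v) s = Lpol π v s - v s := rfl
    rw [h2, Real.norm_eq_abs] at h1
    linarith
  -- greedy dominance : Lpol π v ≤ Lpol π' v
  have hgr : ∀ s, Lpol π v s ≤ Lpol π' v s := by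
    intro s
    rw [hgreedy, hL]
    have hba : BddAbove ((fun d : A → ℝ =>
        sInf ((fun p : A → S → ℝ =>
          ∑ a, d a * ∑ s', p a s' * (r s a s' + γ * v s')) '' P s)) '' stdSimplex ℝ A) := by
      refine ⟨B v s, ?_⟩
      rintro x ⟨d, hd, rfl⟩
      obtain ⟨p₀, hp₀⟩ := hPne s
      refine le_trans (csInf_le (hbddBelow d hd v s) ⟨p₀, hp₀, rfl⟩) ?_
      have := hbd d hd v s p₀ hp₀
      exact le_trans (le_abs_self _) this
    have hmem : Lpol π v s ∈ ((fun d : A → ℝ =>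
        sInf ((fun p : A → S → ℝ =>
          ∑ a, d a * ∑ s', p a s' * (r s a s' + γ * v s')) '' P s)) '' stdSimplex ℝ A) :=
      ⟨π s, hπ s, (hLpol π v s).symm⟩
    exact le_csSup hba hmem
  -- vpi ≤ Lpol π v + γ ε
  have hupper : ∀ s, vpi s ≤ Lpol π v s + γ * ε := by
    have hdec : ∀ s, Lpol π (fun t => v t + ε) s ≤ (fun t => v t + ε) s := by
      intro s
      rw [hshift π hπ v ε s]
      have := (abs_le.1 (hLpv s)).2
      simp only []
      linarith
    have hvle : ∀ s, vpi s ≤ v s + ε := hlb π hπ (fun t => v t + ε) vpi hvpi hdec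
    intro s
    calc vpi s = Lpol π vpi s := (congrFun hvpi s).symm
      _ ≤ Lpol π (fun t => v t + ε) s := hmono π hπ _ _ (fun t => by simpa using hvle t) s
      _ = Lpol π v s + γ * ε := hshift π hπ v ε s
  -- vpi' ≥ Lpol π' v − γ ε
  have hlower : ∀ s, Lpol π' v s - γ * ε ≤ vpi' s := by
    have hinc : ∀ s, (fun t => v t + (-ε)) s ≤ Lpol π' (fun t => v t + (-ε)) s := by
      intro s
      rw [hshift π' hπ' v (-ε) s]
      have h1 := (abs_le.1 (hLpv s)).1
      have h2 := hgr s
      simp only []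
      linarith
    have hvle : ∀ s, v s + (-ε) ≤ vpi' s :=
      hub π' hπ' (fun t => v t + (-ε)) vpi' hvpi' hinc
    intro s
    calc Lpol π' v s - γ * ε = Lpol π' (fun t => v t + (-ε)) s := by
          rw [hshift π' hπ' v (-ε) s]; ring
      _ ≤ Lpol π' vpi' s := hmono π' hπ' _ _ (fun t => by simpa using hvle t) s
      _ = vpi' s := congrFun hvpi' s
  -- combine
  intro s
  simp only []
  have h1 := hupper s
  have h2 := hlower s
  have h3 := hgr s
  have hkey : 2 * γ * ε ≤ 2 * γ * ε / (1 - γ) := by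
    rw [le_div_iff₀ hγ1']
    nlinarith [mul_nonneg (mul_nonneg hγ0.le hγ0.le) hε]
  linarith
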